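/- (Empirical risk maximizer Bregman bound) Let Ω be a finite set, Φ:[0,∞)→ℝ strictly convex and twice differentiable, K a family of functions Ω→dom(Φ*), and P, Q probability distributions on Ω (Q full support) with empirical estimates P̃, Q̃. Suppose K* ∈ K maximizes k ↦ Σ P(ω)k(ω) − Σ Q(ω)Φ*(k(ω)) over all functions (i.e., K* = Φ'(P/Q)), and K̃ ∈ K maximizes k ↦ Σ P̃(ω)k(ω) − Σ Q̃(ω)Φ*(k(ω)) over K. Then B_{Φ*,Q}(K̃,K*) ≤ sup_{k∈K} | Σ_ω (Φ*(k(ω)) − Φ*(K*(ω)))(Q(ω)−Q̃(ω)) − Σ_ω (k(ω)−K*(ω))(P(ω)−P̃(ω)) |. -/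

import Mathlib

open scoped BigOperators

/-- The set whose supremum defines the convex conjugate of `Φ` (with domain `[0,∞)`). -/
def conjSet (Φ : ℝ → ℝ) (b : ℝ) : Set ℝ := {y | ∃ a : ℝ, 0 ≤ a ∧ y = a * b - Φ a}

/-- Convex conjugate `Φ*` of `Φ : [0,∞) → ℝ`. -/
noncomputable def conj (Φ : ℝ → ℝ) (b : ℝ) : ℝ := sSup (conjSet Φ b)

/-- The (effective) domain of the conjugate `Φ*`. -/
def domStar (Φ : ℝ → ℝ) : Set ℝ := {b | BddAbove (conjSet Φ b)}

/-- The ideal scoring function `K* = Φ'(P/Q)`. -/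
noncomputable def Kstar {Ω : Type*} (Φ : ℝ → ℝ) (P Q : Ω → ℝ) (ω : Ω) : ℝ :=
  deriv Φ (P ω / Q ω)

open Set Filter Topology

lemma erm_domStar_mono {Φ : ℝ → ℝ} {b b' : ℝ} (hb : b ∈ domStar Φ) (h : b' ≤ b) :
    b' ∈ domStar Φ := by
  obtain ⟨M, hM⟩ := hb
  refine ⟨M, ?_⟩
  rintro y ⟨a, ha, rfl⟩
  have h1 : a * b - Φ a ≤ M := hM ⟨a, ha, rfl⟩
  nlinarith

lemma erm_tangent {Φ : ℝ → ℝ} (hconv : StrictConvexOn ℝ (Set.Ici 0) Φ)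
    (hdiff : ContDiffOn ℝ 2 Φ (Set.Ioi 0)) {s : ℝ} (hs : 0 < s) :
    IsGreatest (conjSet Φ (deriv Φ s)) (s * deriv Φ s - Φ s) := by
  have hd : DifferentiableAt ℝ Φ s := by
    have := (hdiff.differentiableOn (by norm_num)).differentiableAt
      (isOpen_Ioi.mem_nhds hs)
    exact this
  constructor
  · exact ⟨s, hs.le, rfl⟩
  · rintro y ⟨a, ha, rfl⟩
    rcases lt_trichotomy a s with h | h | h
    · have hsl := hconv.convexOn.slope_le_deriv (mem_Ici.2 ha) (mem_Ici.2 hs.le) h hd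
      rw [slope_def_field] at hsl
      have hpos : 0 < s - a := by linarith
      rw [div_le_iff₀ hpos] at hsl
      nlinarith
    · subst h; simp
    · have hsl := hconv.convexOn.deriv_le_slope (mem_Ici.2 hs.le) (mem_Ici.2 (by linarith : (0:ℝ) ≤ a)) h hd
      rw [slope_def_field] at hsl
      have hpos : 0 < a - s := by linarith
      rw [le_div_iff₀ hpos] at hsl
      nlinarith

lemma erm_conj_eq {Φ : ℝ → ℝ} (hconv : StrictConvexOn ℝ (Set.Ici 0) Φ)
    (hdiff : ContDiffOn ℝ 2 Φ (Set.Ioi 0)) {s : ℝ} (hs : 0 < s) :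
    conj Φ (deriv Φ s) = s * deriv Φ s - Φ s :=
  (erm_tangent hconv hdiff hs).csSup_eq

lemma erm_conj_hasDerivAt {Φ : ℝ → ℝ} (hconv : StrictConvexOn ℝ (Set.Ici 0) Φ)
    (hdiff : ContDiffOn ℝ 2 Φ (Set.Ioi 0)) {t : ℝ} (ht : 0 < t) :
    HasDerivAt (conj Φ) t (deriv Φ t) := by
  have hdAt : ∀ x ∈ Set.Ioi (0:ℝ), DifferentiableAt ℝ Φ x := fun x hx =>
    (hdiff.differentiableOn (by norm_num)).differentiableAt (isOpen_Ioi.mem_nhds hx)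
  have hmono : StrictMonoOn (deriv Φ) (Set.Ioi 0) :=
    (hconv.subset Set.Ioi_subset_Ici_self (convex_Ioi 0)).strictMonoOn_deriv hdAt
  have hcont : ContinuousOn (deriv Φ) (Set.Ioi 0) :=
    hdiff.continuousOn_deriv_of_isOpen isOpen_Ioi (by norm_num)
  rw [hasDerivAt_iff_tendsto_slope]
  rw [Metric.tendsto_nhdsWithin_nhds]
  intro ε hε
  set ε₁ : ℝ := min (ε/2) (t/2) with hε₁def
  have hε₁ : 0 < ε₁ := lt_min (by linarith) (by linarith)
  have hε₁t : ε₁ ≤ t/2 := min_le_right _ _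
  have hε₁ε : ε₁ ≤ ε/2 := min_le_left _ _
  have hlo : (0:ℝ) < t - ε₁ := by linarith
  have hhi : (0:ℝ) < t + ε₁ := by linarith
  have hd1 : deriv Φ (t - ε₁) < deriv Φ t := hmono hlo ht (by linarith)
  have hd2 : deriv Φ t < deriv Φ (t + ε₁) := hmono ht hhi (by linarith)
  refine ⟨min (deriv Φ t - deriv Φ (t - ε₁)) (deriv Φ (t + ε₁) - deriv Φ t),
    lt_min (by linarith) (by linarith), ?_⟩
  intro b hb hdist
  have hne : b ≠ deriv Φ t := hb
  rw [Real.dist_eq, abs_lt] at hdist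
  have hb1 : deriv Φ (t - ε₁) < b := by
    have := hdist.1
    have h2 : min (deriv Φ t - deriv Φ (t - ε₁)) (deriv Φ (t + ε₁) - deriv Φ t)
        ≤ deriv Φ t - deriv Φ (t - ε₁) := min_le_left _ _
    linarith
  have hb2 : b < deriv Φ (t + ε₁) := by
    have := hdist.2
    have h2 : min (deriv Φ t - deriv Φ (t - ε₁)) (deriv Φ (t + ε₁) - deriv Φ t)
        ≤ deriv Φ (t + ε₁) - deriv Φ t := min_le_right _ _
    linarith
  -- find s with deriv Φ s = b by IVT
  have hsub : Set.Icc (t - ε₁) (t + ε₁) ⊆ Set.Ioi (0:ℝ) := fun x hx => lt_of_lt_of_le hlo hx.1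
  have hivt := intermediate_value_Icc (by linarith : t - ε₁ ≤ t + ε₁) (hcont.mono hsub)
  obtain ⟨s, hsmem, hsval⟩ := hivt ⟨hb1.le, hb2.le⟩
  have hs0 : 0 < s := hsub hsmem
  have hst : |s - t| ≤ ε₁ := by
    rw [abs_le]; constructor <;> [linarith [hsmem.1]; linarith [hsmem.2]]
  -- key bounds
  have hcb : conj Φ b = s * b - Φ s := by rw [← hsval]; exact erm_conj_eq hconv hdiff hs0
  have hcb' : conj Φ (deriv Φ t) = t * deriv Φ t - Φ t := erm_conj_eq hconv hdiff ht
  have hA : t * b - Φ t ≤ conj Φ b := by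
    rw [hcb, ← hsval]
    exact (erm_tangent hconv hdiff hs0).2 ⟨t, ht.le, rfl⟩
  have hB : s * deriv Φ t - Φ s ≤ conj Φ (deriv Φ t) := by
    rw [hcb']
    exact (erm_tangent hconv hdiff ht).2 ⟨s, hs0.le, rfl⟩
  set c : ℝ := b - deriv Φ t with hcdef
  have hcne : c ≠ 0 := sub_ne_zero.2 hne
  set D : ℝ := conj Φ b - conj Φ (deriv Φ t) with hDdef
  have h1 : t * c ≤ D := by rw [hDdef, hcb', hcdef]; nlinarith [hA]
  have h2 : D ≤ s * c := by rw [hDdef, hcb, hcb', hcdef]; nlinarith [hB]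
  have habs : |D - t * c| ≤ |s - t| * |c| := by
    rw [abs_of_nonneg (by linarith)]
    calc D - t * c ≤ (s - t) * c := by nlinarith [h2]
      _ ≤ |(s - t) * c| := le_abs_self _
      _ = |s - t| * |c| := abs_mul _ _
  have hslope : slope (conj Φ) (deriv Φ t) b = D / c := by
    rw [slope_def_field, hDdef, hcdef]
  rw [Real.dist_eq, hslope]
  have : D / c - t = (D - t * c) / c := by field_simp
  rw [this, abs_div]
  have hcpos : 0 < |c| := abs_pos.2 hcne
  calc |D - t * c| / |c| ≤ (|s - t| * |c|) / |c| := (div_le_div_iff_of_pos_right hcpos).2 habs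
    _ = |s - t| := by field_simp
    _ ≤ ε₁ := hst
    _ < ε := by linarith


/-- Empirical risk maximizer Bregman bound: the Bregman divergence (w.r.t. `Φ*` and `Q`)
of the empirical risk maximizer `K̃` from the ideal `K*` is bounded by the supremum, over
the class `𝒦`, of the deviation of the empirical objective from the population objective. -/
theorem erm_bregman_bound {Ω : Type*} [Fintype Ω]
    (Φ : ℝ → ℝ) (hconv : StrictConvexOn ℝ (Set.Ici 0) Φ)
    (hdiff : ContDiffOn ℝ 2 Φ (Set.Ioi 0))
    (P Q Pt Qt : Ω → ℝ)
    (hP0 : ∀ ω, 0 ≤ P ω) (hP1 : ∑ ω, P ω = 1)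
    (hQ0 : ∀ ω, 0 < Q ω) (hQ1 : ∑ ω, Q ω = 1)
    (hPt0 : ∀ ω, 0 ≤ Pt ω) (hPt1 : ∑ ω, Pt ω = 1)
    (hQt0 : ∀ ω, 0 ≤ Qt ω) (hQt1 : ∑ ω, Qt ω = 1)
    (𝒦 : Set (Ω → ℝ)) (hdom : ∀ k ∈ 𝒦, ∀ ω, k ω ∈ domStar Φ)
    (hKs : Kstar Φ P Q ∈ 𝒦)
    (hKsmax : ∀ k : Ω → ℝ, (∀ ω, k ω ∈ domStar Φ) →
        (∑ ω, P ω * k ω) - ∑ ω, Q ω * conj Φ (k ω) ≤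
          (∑ ω, P ω * Kstar Φ P Q ω) - ∑ ω, Q ω * conj Φ (Kstar Φ P Q ω))
    (Kt : Ω → ℝ) (hKt : Kt ∈ 𝒦)
    (hKtmax : ∀ k ∈ 𝒦,
        (∑ ω, Pt ω * k ω) - ∑ ω, Qt ω * conj Φ (k ω) ≤
          (∑ ω, Pt ω * Kt ω) - ∑ ω, Qt ω * conj Φ (Kt ω))
    (hbdd : BddAbove {v : ℝ | ∃ k ∈ 𝒦, v =
        |(∑ ω, (conj Φ (k ω) - conj Φ (Kstar Φ P Q ω)) * (Q ω - Qt ω)) -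
          ∑ ω, (k ω - Kstar Φ P Q ω) * (P ω - Pt ω)|}) :
    ∑ ω, Q ω * (conj Φ (Kt ω) - conj Φ (Kstar Φ P Q ω)
        - deriv (conj Φ) (Kstar Φ P Q ω) * (Kt ω - Kstar Φ P Q ω)) ≤
      sSup {v : ℝ | ∃ k ∈ 𝒦, v =
        |(∑ ω, (conj Φ (k ω) - conj Φ (Kstar Φ P Q ω)) * (Q ω - Qt ω)) -
          ∑ ω, (k ω - Kstar Φ P Q ω) * (P ω - Pt ω)|} := by
  classical
  set Ks := Kstar Φ P Q with hKsdef
  -- pointwise optimality of Ks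
  have hopt : ∀ ω : Ω, ∀ b ∈ domStar Φ,
      P ω * b - Q ω * conj Φ b ≤ P ω * Ks ω - Q ω * conj Φ (Ks ω) := by
    intro ω b hb
    have hupd : ∀ ω', Function.update Ks ω b ω' ∈ domStar Φ := by
      intro ω'
      rcases eq_or_ne ω' ω with rfl | h
      · simpa using hb
      · simpa [Function.update_of_ne h] using hdom _ hKs ω'
    have h := hKsmax (Function.update Ks ω b) hupd
    have split : ∀ g : Ω → ℝ, Finset.univ.sum g = g ω + (Finset.univ.erase ω).sum g :=
      fun g => (Finset.add_sum_erase _ g (Finset.mem_univ ω)).symm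
    rw [split (fun ω' => P ω' * Function.update Ks ω b ω'),
        split (fun ω' => Q ω' * conj Φ (Function.update Ks ω b ω')),
        split (fun ω' => P ω' * Ks ω'),
        split (fun ω' => Q ω' * conj Φ (Ks ω'))] at h
    have e2 : (Finset.univ.erase ω).sum (fun ω' => P ω' * Function.update Ks ω b ω')
        = (Finset.univ.erase ω).sum (fun ω' => P ω' * Ks ω') :=
      Finset.sum_congr rfl fun ω' hω' => by
        rw [Function.update_of_ne (Finset.ne_of_mem_erase hω')]
    have e3 : (Finset.univ.erase ω).sum (fun ω' => Q ω' * conj Φ (Function.update Ks ω b ω'))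
        = (Finset.univ.erase ω).sum (fun ω' => Q ω' * conj Φ (Ks ω')) :=
      Finset.sum_congr rfl fun ω' hω' => by
        rw [Function.update_of_ne (Finset.ne_of_mem_erase hω')]
    rw [e2, e3] at h
    simp only [Function.update_self] at h
    linarith
  -- crux pointwise inequality
  have hQd : ∀ ω : Ω, P ω * (Kt ω - Ks ω) ≤
      Q ω * (deriv (conj Φ) (Ks ω) * (Kt ω - Ks ω)) := by
    intro ω
    have hbKs : Ks ω ∈ domStar Φ := hdom _ hKs ω
    have hbKt : Kt ω ∈ domStar Φ := hdom _ hKt ω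
    have hstar : ∀ b' ∈ domStar Φ,
        P ω * b' - P ω * Ks ω ≤ Q ω * conj Φ b' - Q ω * conj Φ (Ks ω) := by
      intro b' hb'
      have := hopt ω b' hb'
      linarith
    by_cases hd : DifferentiableAt ℝ (conj Φ) (Ks ω)
    · have hslope := hasDerivAt_iff_tendsto_slope.1 hd.hasDerivAt
      have hle : Q ω * deriv (conj Φ) (Ks ω) ≤ P ω := by
        have hmle : 𝓝[<] (Ks ω) ≤ 𝓝[≠] (Ks ω) :=
          nhdsWithin_mono _ (fun x hx => by
            simp only [Set.mem_compl_iff, Set.mem_singleton_iff]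
            exact ne_of_lt hx)
        have htend : Filter.Tendsto (fun b' => Q ω * slope (conj Φ) (Ks ω) b')
            (𝓝[<] (Ks ω)) (𝓝 (Q ω * deriv (conj Φ) (Ks ω))) :=
          (hslope.mono_left hmle).const_mul _
        apply le_of_tendsto htend
        filter_upwards [self_mem_nhdsWithin] with b' hb'
        have hb'lt : b' < Ks ω := hb'
        have hb'dom : b' ∈ domStar Φ := erm_domStar_mono hbKs hb'lt.le
        have h1 := hstar b' hb'dom
        have hneg : b' - Ks ω < 0 := by linarith
        rw [slope_def_field, ← mul_div_assoc, div_le_iff_of_neg hneg]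
        rw [mul_sub, mul_sub]
        linarith
      rcases le_or_gt (Kt ω) (Ks ω) with hc | hc
      · have := mul_le_mul_of_nonpos_right hle (by linarith : Kt ω - Ks ω ≤ 0)
        calc P ω * (Kt ω - Ks ω) ≤ Q ω * deriv (conj Φ) (Ks ω) * (Kt ω - Ks ω) := this
          _ = Q ω * (deriv (conj Φ) (Ks ω) * (Kt ω - Ks ω)) := by ring
      · have hge : P ω ≤ Q ω * deriv (conj Φ) (Ks ω) := by
          have hmle : 𝓝[>] (Ks ω) ≤ 𝓝[≠] (Ks ω) :=
            nhdsWithin_mono _ (fun x hx => by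
              simp only [Set.mem_compl_iff, Set.mem_singleton_iff]
              exact ne_of_gt hx)
          have htend : Filter.Tendsto (fun b' => Q ω * slope (conj Φ) (Ks ω) b')
              (𝓝[>] (Ks ω)) (𝓝 (Q ω * deriv (conj Φ) (Ks ω))) :=
            (hslope.mono_left hmle).const_mul _
          apply ge_of_tendsto htend
          filter_upwards [Ioc_mem_nhdsGT_of_mem ⟨le_refl _, hc⟩] with b' hb'
          have hb'dom : b' ∈ domStar Φ := erm_domStar_mono hbKt hb'.2
          have h1 := hstar b' hb'dom
          have hpos : 0 < b' - Ks ω := by linarith [hb'.1]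
          rw [slope_def_field, ← mul_div_assoc, le_div_iff₀ hpos]
          rw [mul_sub, mul_sub]
          linarith
        have heq : Q ω * deriv (conj Φ) (Ks ω) = P ω := le_antisymm hle hge
        have heq2 : Q ω * (deriv (conj Φ) (Ks ω) * (Kt ω - Ks ω)) = P ω * (Kt ω - Ks ω) := by
          rw [← mul_assoc, heq]
        exact le_of_eq heq2.symm
    · rw [deriv_zero_of_not_differentiableAt hd]
      rcases le_or_gt (Kt ω) (Ks ω) with hc | hc
      · have h0 : P ω * (Kt ω - Ks ω) ≤ 0 :=
          mul_nonpos_iff.2 (Or.inl ⟨hP0 ω, by linarith⟩)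
        simpa using h0
      · have hP : P ω = 0 := by
          by_contra hP
          have hPpos : 0 < P ω := (hP0 ω).lt_of_ne (Ne.symm hP)
          have ht : 0 < P ω / Q ω := div_pos hPpos (hQ0 ω)
          exact hd (erm_conj_hasDerivAt hconv hdiff ht).differentiableAt
        simp [hP]
  -- assemble
  have step1 : ∑ ω, Q ω * (conj Φ (Kt ω) - conj Φ (Ks ω)
        - deriv (conj Φ) (Ks ω) * (Kt ω - Ks ω))
      ≤ ∑ ω, (Q ω * conj Φ (Kt ω) - Q ω * conj Φ (Ks ω) - P ω * (Kt ω - Ks ω)) := by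
    apply Finset.sum_le_sum
    intro ω _
    have h := hQd ω
    have hexp : Q ω * (conj Φ (Kt ω) - conj Φ (Ks ω)
          - deriv (conj Φ) (Ks ω) * (Kt ω - Ks ω))
        = Q ω * conj Φ (Kt ω) - Q ω * conj Φ (Ks ω)
          - Q ω * (deriv (conj Φ) (Ks ω) * (Kt ω - Ks ω)) := by ring
    rw [hexp]
    linarith
  have step2 : 0 ≤ ((∑ ω, Pt ω * Kt ω) - ∑ ω, Qt ω * conj Φ (Kt ω))
      - ((∑ ω, Pt ω * Ks ω) - ∑ ω, Qt ω * conj Φ (Ks ω)) := by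
    have := hKtmax Ks hKs
    linarith
  have step3 : ∑ ω, (Q ω * conj Φ (Kt ω) - Q ω * conj Φ (Ks ω) - P ω * (Kt ω - Ks ω))
      + (((∑ ω, Pt ω * Kt ω) - ∑ ω, Qt ω * conj Φ (Kt ω))
        - ((∑ ω, Pt ω * Ks ω) - ∑ ω, Qt ω * conj Φ (Ks ω)))
      = (∑ ω, (conj Φ (Kt ω) - conj Φ (Ks ω)) * (Q ω - Qt ω))
        - ∑ ω, (Kt ω - Ks ω) * (P ω - Pt ω) := by
    simp only [← Finset.sum_sub_distrib, ← Finset.sum_add_distrib]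
    exact Finset.sum_congr rfl fun ω _ => by ring
  have habs : (∑ ω, (conj Φ (Kt ω) - conj Φ (Ks ω)) * (Q ω - Qt ω))
        - ∑ ω, (Kt ω - Ks ω) * (P ω - Pt ω)
      ≤ |(∑ ω, (conj Φ (Kt ω) - conj Φ (Ks ω)) * (Q ω - Qt ω))
        - ∑ ω, (Kt ω - Ks ω) * (P ω - Pt ω)| := le_abs_self _
  have hsup : |(∑ ω, (conj Φ (Kt ω) - conj Φ (Ks ω)) * (Q ω - Qt ω))
        - ∑ ω, (Kt ω - Ks ω) * (P ω - Pt ω)|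
      ≤ sSup {v : ℝ | ∃ k ∈ 𝒦, v =
        |(∑ ω, (conj Φ (k ω) - conj Φ (Ks ω)) * (Q ω - Qt ω)) -
          ∑ ω, (k ω - Ks ω) * (P ω - Pt ω)|} :=
    le_csSup hbdd ⟨Kt, hKt, rfl⟩
  linarith
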